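/- Let n ≥ 1 and define a(x) := Σ_{k=0}^{⌊(n-1)/2⌋} (-1)^k s_{2k+1}(x) and b(x) := Σ_{k=0}^{⌊n/2⌋} (-1)^k s_{2k}(x) for x ∈ ℝⁿ, where s_m denotes the m-th elementary symmetric polynomial. Fix x ∈ ℝⁿ with a(x) ≠ 0 and fix an index k ∈ {1,…,n}. Then the function of one real variable t ↦ -arctan( b(x₁,…,x_{k-1}, t, x_{k+1},…,x_n) / a(x₁,…,x_{k-1}, t, x_{k+1},…,x_n) ) is differentiable at t = x_k with derivative 1/(1 + x_k²). -/

import Mathlib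

open Finset Real

open Finset

/-- The `m`-th elementary symmetric polynomial of `x : Fin n → ℝ`. -/
noncomputable def esymmVal {n : ℕ} (m : ℕ) (x : Fin n → ℝ) : ℝ :=
  ∑ S ∈ Finset.powersetCard m (Finset.univ : Finset (Fin n)), ∏ i ∈ S, x i

/-- `a(x) = Σ_{k=0}^{⌊(n-1)/2⌋} (-1)^k s_{2k+1}(x)`. -/
noncomputable def aVal {n : ℕ} (x : Fin n → ℝ) : ℝ :=
  ∑ k ∈ Finset.range ((n - 1) / 2 + 1), (-1 : ℝ) ^ k * esymmVal (2 * k + 1) x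

/-- `b(x) = Σ_{k=0}^{⌊n/2⌋} (-1)^k s_{2k}(x)`. -/
noncomputable def bVal {n : ℕ} (x : Fin n → ℝ) : ℝ :=
  ∑ k ∈ Finset.range (n / 2 + 1), (-1 : ℝ) ^ k * esymmVal (2 * k) x

noncomputable def Eaux {n : ℕ} (x : Fin n → ℝ) (k : Fin n) (m : ℕ) : ℝ :=
  ∑ S ∈ Finset.powersetCard m ((Finset.univ : Finset (Fin n)).erase k), ∏ i ∈ S, x i

lemma Eaux_eq_zero {n : ℕ} (x : Fin n → ℝ) (k : Fin n) : Eaux x k n = 0 := by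
  have hpos : 0 < n := k.pos
  have hcard : ((Finset.univ : Finset (Fin n)).erase k).card < n := by
    rw [Finset.card_erase_of_mem (Finset.mem_univ k), Finset.card_univ, Fintype.card_fin]
    omega
  rw [Eaux, Finset.powersetCard_eq_empty.mpr hcard, Finset.sum_empty]

lemma esymmVal_zero {n : ℕ} (x : Fin n → ℝ) : esymmVal 0 x = 1 := by
  simp [esymmVal]

lemma esymmVal_update {n : ℕ} (x : Fin n → ℝ) (k : Fin n) (t : ℝ) (m : ℕ) :
    esymmVal (m + 1) (Function.update x k t) = Eaux x k (m + 1) + t * Eaux x k m := by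
  classical
  have hk : k ∉ (Finset.univ : Finset (Fin n)).erase k := Finset.notMem_erase k _
  have hins : (Finset.univ : Finset (Fin n)) = insert k (Finset.univ.erase k) :=
    (Finset.insert_erase (Finset.mem_univ k)).symm
  have hdisj : Disjoint (Finset.powersetCard (m+1) ((Finset.univ : Finset (Fin n)).erase k))
      ((Finset.powersetCard m ((Finset.univ : Finset (Fin n)).erase k)).image (insert k)) := by
    rw [Finset.disjoint_left]
    rintro S hS hS'
    obtain ⟨T, hT, rfl⟩ := Finset.mem_image.mp hS'
    exact hk ((Finset.mem_powersetCard.mp hS).1 (Finset.mem_insert_self k T))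
  rw [esymmVal]
  conv_lhs => rw [hins]
  rw [Finset.powersetCard_succ_insert hk, Finset.sum_union hdisj]
  congr 1
  · apply Finset.sum_congr rfl
    intro S hS
    apply Finset.prod_congr rfl
    intro i hi
    have : i ≠ k := by
      intro h; subst h
      exact hk ((Finset.mem_powersetCard.mp hS).1 hi)
    rw [Function.update_of_ne this]
  · rw [Finset.sum_image, Eaux, Finset.mul_sum]
    · apply Finset.sum_congr rfl
      intro T hT
      have hkT : k ∉ T := fun h => hk ((Finset.mem_powersetCard.mp hT).1 h)
      rw [Finset.prod_insert hkT, Function.update_self]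
      congr 1
      apply Finset.prod_congr rfl
      intro i hi
      have : i ≠ k := fun h => hkT (h ▸ hi)
      rw [Function.update_of_ne this]
    · intro T hT T' hT' h
      have hkT : k ∉ T := fun hh => hk ((Finset.mem_powersetCard.mp hT).1 hh)
      have hkT' : k ∉ T' := fun hh => hk ((Finset.mem_powersetCard.mp hT').1 hh)
      have := congrArg (fun s => Finset.erase s k) h
      simpa [Finset.erase_insert hkT, Finset.erase_insert hkT'] using this

lemma aVal_update {n : ℕ} (hn : 1 ≤ n) (x : Fin n → ℝ) (k : Fin n) (t : ℝ) :
    aVal (Function.update x k t)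
      = (∑ j ∈ Finset.range ((n - 1) / 2 + 1), (-1 : ℝ) ^ j * Eaux x k (2 * j + 1))
        + t * ∑ j ∈ Finset.range (n / 2 + 1), (-1 : ℝ) ^ j * Eaux x k (2 * j) := by
  have hC : (∑ j ∈ Finset.range (n / 2 + 1), (-1 : ℝ) ^ j * Eaux x k (2 * j))
      = ∑ j ∈ Finset.range ((n - 1) / 2 + 1), (-1 : ℝ) ^ j * Eaux x k (2 * j) := by
    rcases Nat.even_or_odd n with ⟨m, hm⟩ | ⟨m, hm⟩
    · have h2 : n / 2 + 1 = ((n - 1) / 2 + 1) + 1 := by omega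
      rw [h2, Finset.sum_range_succ]
      have h3 : 2 * ((n - 1) / 2 + 1) = n := by omega
      rw [h3, Eaux_eq_zero, mul_zero, add_zero]
    · have h2 : n / 2 + 1 = (n - 1) / 2 + 1 := by omega
      rw [h2]
  rw [aVal, hC, Finset.mul_sum, ← Finset.sum_add_distrib]
  apply Finset.sum_congr rfl
  intro j _
  rw [esymmVal_update]
  ring

lemma Eaux_zero {n : ℕ} (x : Fin n → ℝ) (k : Fin n) : Eaux x k 0 = 1 := by
  simp [Eaux]

lemma bVal_update {n : ℕ} (hn : 1 ≤ n) (x : Fin n → ℝ) (k : Fin n) (t : ℝ) :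
    bVal (Function.update x k t)
      = (∑ j ∈ Finset.range (n / 2 + 1), (-1 : ℝ) ^ j * Eaux x k (2 * j))
        - t * ∑ j ∈ Finset.range ((n - 1) / 2 + 1), (-1 : ℝ) ^ j * Eaux x k (2 * j + 1) := by
  have hA : (∑ j ∈ Finset.range ((n - 1) / 2 + 1), (-1 : ℝ) ^ j * Eaux x k (2 * j + 1))
      = ∑ j ∈ Finset.range (n / 2), (-1 : ℝ) ^ j * Eaux x k (2 * j + 1) := by
    rcases Nat.even_or_odd n with ⟨m, hm⟩ | ⟨m, hm⟩
    · have h2 : (n - 1) / 2 + 1 = n / 2 := by omega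
      rw [h2]
    · have h2 : (n - 1) / 2 + 1 = n / 2 + 1 := by omega
      rw [h2, Finset.sum_range_succ]
      have h3 : 2 * (n / 2) + 1 = n := by omega
      rw [h3, Eaux_eq_zero, mul_zero, add_zero]
  have hterm : ∀ i : ℕ, esymmVal (2 * (i + 1)) (Function.update x k t)
      = Eaux x k (2 * (i + 1)) + t * Eaux x k (2 * i + 1) := by
    intro i
    have h : 2 * (i + 1) = (2 * i + 1) + 1 := by ring
    rw [h, esymmVal_update]
  rw [bVal, hA, Finset.sum_range_succ' (fun j => (-1 : ℝ) ^ j * esymmVal (2 * j) (Function.update x k t)) (n / 2)]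
  conv_rhs =>
    rw [Finset.sum_range_succ' (fun j => (-1 : ℝ) ^ j * Eaux x k (2 * j)) (n / 2)]
  simp only [hterm, pow_zero, one_mul, Nat.mul_zero, esymmVal_zero, Eaux_zero]
  rw [Finset.mul_sum]
  have key : ∀ i ∈ Finset.range (n / 2), (-1 : ℝ) ^ (i + 1) * (Eaux x k (2 * (i + 1)) + t * Eaux x k (2 * i + 1))
      = (-1 : ℝ) ^ (i + 1) * Eaux x k (2 * (i + 1)) - t * ((-1 : ℝ) ^ i * Eaux x k (2 * i + 1)) := by
    intro i _
    ring
  rw [Finset.sum_congr rfl key, Finset.sum_sub_distrib]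
  ring

theorem stmt_3 (n : ℕ) (hn : 1 ≤ n) (x : Fin n → ℝ) (ha : aVal x ≠ 0) (k : Fin n) :
    HasDerivAt
      (fun t : ℝ =>
        -Real.arctan (bVal (Function.update x k t) / aVal (Function.update x k t)))
      (1 / (1 + (x k) ^ 2)) (x k) := by
  classical
  set A := ∑ j ∈ Finset.range ((n - 1) / 2 + 1), (-1 : ℝ) ^ j * Eaux x k (2 * j + 1) with hAdef
  set C := ∑ j ∈ Finset.range (n / 2 + 1), (-1 : ℝ) ^ j * Eaux x k (2 * j) with hCdef
  have hfun : (fun t : ℝ =>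
      -Real.arctan (bVal (Function.update x k t) / aVal (Function.update x k t)))
      = fun t : ℝ => -Real.arctan ((C - t * A) / (A + t * C)) := by
    funext t
    rw [aVal_update hn, bVal_update hn, hAdef, hCdef]
  rw [hfun]
  set c := x k with hc
  have hval : aVal x = A + c * C := by
    have h := aVal_update hn x k c
    rw [Function.update_eq_self] at h
    rw [h, hAdef, hCdef]
  have hvc : A + c * C ≠ 0 := by rw [← hval]; exact ha
  have hu : HasDerivAt (fun t : ℝ => C - t * A) (0 - 1 * A) c :=
    (hasDerivAt_const c C).sub ((hasDerivAt_id c).mul_const A)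
  have hv : HasDerivAt (fun t : ℝ => A + t * C) (0 + 1 * C) c :=
    (hasDerivAt_const c A).add ((hasDerivAt_id c).mul_const C)
  have harc := ((hu.div hv hvc).arctan).neg
  convert harc using 1 <;> try rfl
  have hAC : A ^ 2 + C ^ 2 ≠ 0 := by
    intro h
    have hA0 : A = 0 := by nlinarith [sq_nonneg A, sq_nonneg C]
    have hC0 : C = 0 := by nlinarith [sq_nonneg A, sq_nonneg C]
    apply hvc
    rw [hA0, hC0]; ring
  have h1 : (1 : ℝ) + ((C - c * A) / (A + c * C)) ^ 2 ≠ 0 := by positivity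
  have h2 : (1 : ℝ) + c ^ 2 ≠ 0 := by positivity
  simp only [Pi.div_apply]
  field_simp
  ring
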